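/- The function ψ_p(x) = e^{imx} [1 + ∑_{n=1}^∞ Aⁿ e^{nx} ∏_{k=1}^n 1/(k² + 2imk)] is twice differentiable on ℝ and satisfies ψ_p''(x) + m² ψ_p(x) - A e^x ψ_p(x) = 0 for all x. -/

import Mathlib

open Complex

noncomputable def myc (m A : ℝ) (n : ℕ) : ℂ :=
  (A : ℂ) ^ n * ∏ k ∈ Finset.Icc 1 n, ((k : ℂ) ^ 2 + 2 * I * m * k)⁻¹

noncomputable def mymu (m : ℝ) (n : ℕ) : ℂ := (n : ℂ) + I * m

lemma myD_ne (m : ℝ) (hm : m ≠ 0) (n : ℕ) :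
    ((n : ℂ) + 1) ^ 2 + 2 * I * m * ((n : ℂ) + 1) ≠ 0 := by
  intro h
  have him : (((n : ℂ) + 1) ^ 2 + 2 * I * m * ((n : ℂ) + 1)).im = 2 * m * ((n:ℝ) + 1) := by
    simp [Complex.add_im, Complex.mul_im, Complex.mul_re, sq]
  rw [h, Complex.zero_im] at him
  have hpos : (0:ℝ) < (n:ℝ) + 1 := by positivity
  have := mul_pos (mul_pos (by norm_num : (0:ℝ) < 2) (abs_pos.mpr hm)) hpos
  rcases mul_eq_zero.mp him.symm with h1 | h2
  · rcases mul_eq_zero.mp h1 with h3 | h4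
    · norm_num at h3
    · exact hm h4
  · linarith

lemma myc_succ (m A : ℝ) (n : ℕ) :
    myc m A (n + 1) = myc m A n *
      ((A : ℂ) * (((n : ℂ) + 1) ^ 2 + 2 * I * m * ((n : ℂ) + 1))⁻¹) := by
  rw [myc, myc, Finset.prod_Icc_succ_top (by omega : 1 ≤ n + 1)]
  push_cast
  ring

lemma myc_rec (m A : ℝ) (hm : m ≠ 0) (n : ℕ) :
    myc m A (n + 1) * (((n : ℂ) + 1) ^ 2 + 2 * I * m * ((n : ℂ) + 1)) =
      (A : ℂ) * myc m A n := by
  have hD := myD_ne m hm n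
  rw [myc_succ]
  rw [mul_assoc, mul_assoc, inv_mul_cancel₀ hD, mul_one, mul_comm]

lemma myD_norm_ge (m : ℝ) (n : ℕ) :
    ((n : ℝ) + 1) ^ 2 ≤ ‖((n : ℂ) + 1) ^ 2 + 2 * I * m * ((n : ℂ) + 1)‖ := by
  have h := Complex.abs_re_le_norm (((n : ℂ) + 1) ^ 2 + 2 * I * m * ((n : ℂ) + 1))
  have hre : (((n : ℂ) + 1) ^ 2 + 2 * I * m * ((n : ℂ) + 1)).re = ((n : ℝ) + 1) ^ 2 := by
    simp [Complex.add_re, Complex.mul_re, Complex.mul_im, sq]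
  rw [hre] at h
  calc ((n : ℝ) + 1) ^ 2 ≤ |((n : ℝ) + 1) ^ 2| := le_abs_self _
    _ ≤ _ := h

lemma norm_term (m : ℝ) (n : ℕ) (b : ℂ) (y : ℝ) :
    ‖b * Complex.exp (mymu m n * y)‖ = ‖b‖ * Real.exp (n * y) := by
  rw [norm_mul, Complex.norm_exp]
  congr 2
  simp [mymu, Complex.mul_re, Complex.add_re, Complex.add_im, Complex.mul_im]

lemma base_summable (m A : ℝ) (R : ℝ) :
    Summable (fun n : ℕ => ‖myc m A n‖ * Real.exp (n * R)) := by
  apply summable_of_ratio_norm_eventually_le (r := 1/2) (by norm_num)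
  obtain ⟨N, hN⟩ := exists_nat_ge (2 * (|A| * Real.exp R))
  filter_upwards [Filter.eventually_ge_atTop N] with n hn
  have hD := myD_norm_ge m n
  have hDpos : (0 : ℝ) < ‖((n : ℂ) + 1) ^ 2 + 2 * I * m * ((n : ℂ) + 1)‖ := by
    have : (0:ℝ) < ((n:ℝ)+1)^2 := by positivity
    linarith
  have hcn : ‖myc m A (n+1)‖ = ‖myc m A n‖ *
      (|A| * ‖((n : ℂ) + 1) ^ 2 + 2 * I * m * ((n : ℂ) + 1)‖⁻¹) := by
    rw [myc_succ, norm_mul, norm_mul, norm_inv, Complex.norm_real, Real.norm_eq_abs]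
  have hkey : |A| * ‖((n : ℂ) + 1) ^ 2 + 2 * I * m * ((n : ℂ) + 1)‖⁻¹ * Real.exp R ≤ 1/2 := by
    rw [mul_comm (|A|) _, mul_assoc, inv_mul_le_iff₀ hDpos]
    have h1 : 2 * (|A| * Real.exp R) ≤ ((n:ℝ) + 1)^2 := by
      have : ((n:ℝ)) ≤ ((n:ℝ)+1)^2 := by nlinarith [Nat.cast_nonneg (α := ℝ) n]
      have hNn : (N:ℝ) ≤ (n:ℝ) := Nat.cast_le.2 hn
      linarith
    nlinarith [hD, abs_nonneg A, Real.exp_pos R]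
  have hexp : Real.exp ((n+1 : ℕ) * R) = Real.exp (n * R) * Real.exp R := by
    rw [← Real.exp_add]; push_cast; ring_nf
  rw [Real.norm_eq_abs, Real.norm_eq_abs, _root_.abs_of_nonneg (by positivity),
    _root_.abs_of_nonneg (by positivity), hcn, hexp]
  calc ‖myc m A n‖ * (|A| * ‖((n : ℂ) + 1) ^ 2 + 2 * I * m * ((n : ℂ) + 1)‖⁻¹) *
        (Real.exp (n * R) * Real.exp R)
      = (|A| * ‖((n : ℂ) + 1) ^ 2 + 2 * I * m * ((n : ℂ) + 1)‖⁻¹ * Real.exp R) *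
        (‖myc m A n‖ * Real.exp (n * R)) := by ring
    _ ≤ (1/2) * (‖myc m A n‖ * Real.exp (n * R)) := by
        apply mul_le_mul_of_nonneg_right hkey (by positivity)

lemma step_summable (m : ℝ) (b : ℕ → ℂ)
    (h : ∀ R : ℝ, Summable (fun n : ℕ => ‖b n‖ * Real.exp (n * R))) (R : ℝ) :
    Summable (fun n : ℕ => ‖b n * mymu m n‖ * Real.exp (n * R)) := by
  have hs : Summable (fun n : ℕ => (1 + |m|) * (‖b n‖ * Real.exp (n * (R + 1)))) :=
    (h (R + 1)).mul_left _
  apply Summable.of_nonneg_of_le (fun n => by positivity) _ hs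
  intro n
  have hmu : ‖mymu m n‖ ≤ (1 + |m|) * Real.exp n := by
    have h1 : ‖mymu m n‖ ≤ (n : ℝ) + |m| := by
      rw [mymu]
      refine (norm_add_le _ _).trans ?_
      simp [Complex.norm_natCast, Complex.norm_real, Real.norm_eq_abs]
    have h2 : (n : ℝ) + 1 ≤ Real.exp n := by
      have := Real.add_one_le_exp (n : ℝ); linarith
    have h3 : (n : ℝ) + |m| ≤ (1 + |m|) * ((n : ℝ) + 1) := by
      nlinarith [abs_nonneg m, Nat.cast_nonneg (α := ℝ) n]
    calc ‖mymu m n‖ ≤ (n : ℝ) + |m| := h1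
      _ ≤ (1 + |m|) * ((n : ℝ) + 1) := h3
      _ ≤ (1 + |m|) * Real.exp n := by
          apply mul_le_mul_of_nonneg_left h2 (by positivity)
  have hexp : Real.exp (n * (R + 1)) = Real.exp (n * R) * Real.exp n := by
    rw [← Real.exp_add]; ring_nf
  rw [norm_mul, hexp]
  calc ‖b n‖ * ‖mymu m n‖ * Real.exp (n * R)
      ≤ ‖b n‖ * ((1 + |m|) * Real.exp n) * Real.exp (n * R) := by
        apply mul_le_mul_of_nonneg_right _ (by positivity)
        exact mul_le_mul_of_nonneg_left hmu (norm_nonneg _)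
    _ = (1 + |m|) * (‖b n‖ * (Real.exp (n * R) * Real.exp n)) := by ring

lemma summable_term (m : ℝ) (b : ℕ → ℂ)
    (h : ∀ R : ℝ, Summable (fun n : ℕ => ‖b n‖ * Real.exp (n * R))) (y : ℝ) :
    Summable (fun n : ℕ => b n * Complex.exp (mymu m n * y)) := by
  apply Summable.of_norm
  simp only [norm_term]
  exact h y

lemma hasDerivAt_term (c b : ℂ) (x : ℝ) :
    HasDerivAt (fun y : ℝ => b * Complex.exp (c * y)) (b * c * Complex.exp (c * x)) x := by
  have h1 : HasDerivAt (fun z : ℂ => Complex.exp (c * z)) (c * Complex.exp (c * x)) (x : ℂ) := by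
    have := ((hasDerivAt_id (x : ℂ)).const_mul c).cexp
    simpa [mul_comm] using this
  have h2 := h1.comp_ofReal
  have h3 := h2.const_mul b
  rw [mul_assoc]
  exact h3

lemma hasDerivAt_sum (m : ℝ) (b : ℕ → ℂ)
    (h : ∀ R : ℝ, Summable (fun n : ℕ => ‖b n‖ * Real.exp (n * R))) (x : ℝ) :
    HasDerivAt (fun y : ℝ => ∑' n : ℕ, b n * Complex.exp (mymu m n * y))
      (∑' n : ℕ, b n * mymu m n * Complex.exp (mymu m n * x)) x := by
  have hb' : ∀ R : ℝ, Summable (fun n : ℕ => ‖b n * mymu m n‖ * Real.exp (n * R)) :=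
    step_summable m b h
  have H1 : TendstoUniformlyOn
      (fun (t : Finset ℕ) (y : ℝ) => ∑ n ∈ t, b n * mymu m n * Complex.exp (mymu m n * y))
      (fun y : ℝ => ∑' n : ℕ, b n * mymu m n * Complex.exp (mymu m n * y))
      Filter.atTop (Set.Iio (x + 1)) := by
    apply tendstoUniformlyOn_tsum (hb' (x + 1))
    intro n y hy
    rw [norm_term]
    have hy' : y ≤ x + 1 := le_of_lt hy
    gcongr
  have H2 : ∀ᶠ (t : Finset ℕ) in Filter.atTop, ∀ y : ℝ, y ∈ Set.Iio (x + 1) →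
      HasDerivAt (fun y : ℝ => ∑ n ∈ t, b n * Complex.exp (mymu m n * y))
        (∑ n ∈ t, b n * mymu m n * Complex.exp (mymu m n * y)) y := by
    apply Filter.Eventually.of_forall
    intro t y _
    exact HasDerivAt.fun_sum fun n _ => hasDerivAt_term (mymu m n) (b n) y
  have H3 : ∀ y : ℝ, y ∈ Set.Iio (x + 1) →
      Filter.Tendsto (fun t : Finset ℕ => ∑ n ∈ t, b n * Complex.exp (mymu m n * y))
        Filter.atTop (nhds (∑' n : ℕ, b n * Complex.exp (mymu m n * y))) := by
    intro y _
    exact (summable_term m b h y).hasSum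
  exact hasDerivAt_of_tendstoUniformlyOn isOpen_Iio H1 H2 H3 (Set.mem_Iio.2 (lt_add_one x))

lemma mymu_succ_mul (m : ℝ) (n : ℕ) (x : ℝ) :
    mymu m (n + 1) * (x : ℂ) = mymu m n * x + x := by
  rw [mymu, mymu]; push_cast; ring

theorem stmt_12 (m A : ℝ) (hm : m ≠ 0)
    (ψ : ℝ → ℂ)
    (hψ : ∀ x : ℝ, ψ x = Complex.exp (I * m * x) *
      (1 + ∑' n : ℕ, (A : ℂ) ^ (n + 1) * (Real.exp ((n + 1) * x) : ℂ) *
        ∏ k ∈ Finset.Icc 1 (n + 1), ((k : ℂ) ^ 2 + 2 * I * m * k)⁻¹)) :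
    (∀ x, DifferentiableAt ℝ ψ x) ∧ (∀ x, DifferentiableAt ℝ (deriv ψ) x) ∧
      ∀ x, deriv (deriv ψ) x + (m : ℂ) ^ 2 * ψ x - (A : ℂ) * (Real.exp x : ℂ) * ψ x = 0 := by
  have hb0 : ∀ R : ℝ, Summable (fun n : ℕ => ‖myc m A n‖ * Real.exp (n * R)) :=
    base_summable m A
  have hb1 : ∀ R : ℝ, Summable (fun n : ℕ => ‖myc m A n * mymu m n‖ * Real.exp (n * R)) :=
    step_summable m _ hb0
  have hb2 : ∀ R : ℝ,
      Summable (fun n : ℕ => ‖myc m A n * mymu m n * mymu m n‖ * Real.exp (n * R)) :=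
    step_summable m _ hb1
  -- ψ equals the full series
  have hψe : ψ = fun x : ℝ => ∑' n : ℕ, myc m A n * Complex.exp (mymu m n * x) := by
    funext x
    rw [hψ x]
    have hs : Summable (fun n : ℕ => myc m A n * Complex.exp (mymu m n * x)) :=
      summable_term m _ hb0 x
    rw [Summable.tsum_eq_zero_add hs]
    have h0 : myc m A 0 * Complex.exp (mymu m 0 * x) = Complex.exp (I * m * x) := by
      simp [myc, mymu, mul_assoc]
    rw [h0, mul_add, mul_one, tsum_mul_left.symm]
    congr 1
    apply tsum_congr
    intro n
    have e2 : mymu m (n + 1) * (x : ℂ) = ((n : ℂ) + 1) * x + I * m * x := by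
      rw [mymu]; push_cast; ring
    have e1 : ((Real.exp (((n : ℝ) + 1) * x) : ℝ) : ℂ) =
        Complex.exp (((n : ℂ) + 1) * x) := by
      rw [Complex.ofReal_exp]; norm_cast
    rw [e1, e2, Complex.exp_add, myc]
    ring
  -- first derivative
  have hd1 : ∀ x : ℝ, HasDerivAt ψ
      (∑' n : ℕ, myc m A n * mymu m n * Complex.exp (mymu m n * x)) x := by
    intro x
    rw [hψe]
    exact hasDerivAt_sum m _ hb0 x
  have hdψ : deriv ψ = fun x : ℝ =>
      ∑' n : ℕ, myc m A n * mymu m n * Complex.exp (mymu m n * x) := by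
    funext x; exact (hd1 x).deriv
  have hd2 : ∀ x : ℝ, HasDerivAt (deriv ψ)
      (∑' n : ℕ, myc m A n * mymu m n * mymu m n * Complex.exp (mymu m n * x)) x := by
    intro x
    rw [hdψ]
    exact hasDerivAt_sum m _ hb1 x
  refine ⟨fun x => (hd1 x).differentiableAt, fun x => (hd2 x).differentiableAt, fun x => ?_⟩
  rw [(hd2 x).deriv, hψe]
  -- summabilities at x
  have S0 : Summable (fun n : ℕ => myc m A n * Complex.exp (mymu m n * x)) :=
    summable_term m _ hb0 x
  have S2 : Summable (fun n : ℕ => myc m A n * mymu m n * mymu m n * Complex.exp (mymu m n * x)) :=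
    summable_term m _ hb2 x
  have S0m : Summable (fun n : ℕ => (m : ℂ) ^ 2 * (myc m A n * Complex.exp (mymu m n * x))) :=
    S0.mul_left _
  have S0A : Summable (fun n : ℕ =>
      ((A : ℂ) * (Real.exp x : ℂ)) * (myc m A n * Complex.exp (mymu m n * x))) :=
    S0.mul_left _
  rw [← tsum_mul_left (a := (m : ℂ) ^ 2), ← tsum_mul_left (a := (A : ℂ) * (Real.exp x : ℂ)),
    ← Summable.tsum_add S2 S0m, ← Summable.tsum_sub (S2.add S0m) S0A]
  -- termwise identity: combined term = P n - Q n
  have hterm : ∀ n : ℕ,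
      myc m A n * mymu m n * mymu m n * Complex.exp (mymu m n * x) +
        (m : ℂ) ^ 2 * (myc m A n * Complex.exp (mymu m n * x)) -
        ((A : ℂ) * (Real.exp x : ℂ)) * (myc m A n * Complex.exp (mymu m n * x)) =
      myc m A n * ((n : ℂ) ^ 2 + 2 * I * m * n) * Complex.exp (mymu m n * x) -
        (A : ℂ) * myc m A n * Complex.exp (mymu m (n + 1) * x) := by
    intro n
    rw [Complex.ofReal_exp, mymu_succ_mul, Complex.exp_add, mymu]
    linear_combination (myc m A n * Complex.exp (((n : ℂ) + I * m) * x) * (m : ℂ) ^ 2) *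
      Complex.I_sq
  rw [tsum_congr hterm]
  -- summability of P and Q
  have hQ : ∀ n : ℕ,
      ((A : ℂ) * (Real.exp x : ℂ)) * (myc m A n * Complex.exp (mymu m n * x)) =
        (A : ℂ) * myc m A n * Complex.exp (mymu m (n + 1) * x) := by
    intro n
    rw [Complex.ofReal_exp, mymu_succ_mul, Complex.exp_add]; ring
  have SP : Summable (fun n : ℕ =>
      myc m A n * ((n : ℂ) ^ 2 + 2 * I * m * n) * Complex.exp (mymu m n * x)) := by
    apply (S2.add S0m).congr
    intro n
    linear_combination hterm n + hQ n
  have SQ : Summable (fun n : ℕ =>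
      (A : ℂ) * myc m A n * Complex.exp (mymu m (n + 1) * x)) :=
    S0A.congr hQ
  rw [Summable.tsum_sub SP SQ, Summable.tsum_eq_zero_add SP]
  have hP0 : myc m A 0 * ((0 : ℕ) ^ 2 + 2 * I * m * (0 : ℕ) : ℂ) *
      Complex.exp (mymu m 0 * x) = 0 := by
    simp
  rw [hP0, zero_add]
  have hshift : ∀ n : ℕ,
      myc m A (n + 1) * (((n + 1 : ℕ) : ℂ) ^ 2 + 2 * I * m * ((n + 1 : ℕ) : ℂ)) *
        Complex.exp (mymu m (n + 1) * x) =
      (A : ℂ) * myc m A n * Complex.exp (mymu m (n + 1) * x) := by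
    intro n
    have hrec := myc_rec m A hm n
    push_cast
    linear_combination Complex.exp (mymu m (n + 1) * x) * hrec
  rw [tsum_congr hshift, sub_self]
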